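/- Let G be a finite graph with Bethe-Hessian H_r and suppose r > 1, p ≥ 2, and the p-th smallest eigenvalue of D − rA is strictly negative. Set τ(r) = −s_p^↑(D − rA). Then the p-th largest eigenvalue of L_{τ(r)}^{sym} = (D + τ(r)I)^{-1/2} A (D + τ(r)I)^{-1/2} equals 1/r. -/

import Mathlib

open Matrix

section Aux

variable {n : ℕ}

private lemma bh_coord_zero (v : OrthonormalBasis (Fin n) ℝ (EuclideanSpace ℝ (Fin n)))
    (P : Fin n → Prop) (x : EuclideanSpace ℝ (Fin n))
    (hx : x ∈ Submodule.span ℝ (Set.range fun i : {i // P i} => (v i : EuclideanSpace ℝ (Fin n))))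
    (j : Fin n) (hj : ¬ P j) : (inner ℝ (v j) x : ℝ) = 0 := by
  induction hx using Submodule.span_induction with
  | mem y hy =>
      obtain ⟨i, rfl⟩ := hy
      exact v.orthonormal.2 (fun h => hj (h ▸ i.2))
  | zero => simp
  | add y z _ _ hy hz => rw [inner_add_right, hy, hz, add_zero]
  | smul a y _ hy => rw [inner_smul_right, hy, mul_zero]

private lemma bh_eq_zero_of_coords (v : OrthonormalBasis (Fin n) ℝ (EuclideanSpace ℝ (Fin n)))
    (x : EuclideanSpace ℝ (Fin n)) (h : ∀ i, (inner ℝ (v i) x : ℝ) = 0) : x = 0 := by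
  have hs := v.sum_inner_mul_inner x x
  have h0 : (inner ℝ x x : ℝ) = 0 := by
    rw [← hs]
    exact Finset.sum_eq_zero fun i _ => by rw [h i, mul_zero]
  exact inner_self_eq_zero.mp h0

private lemma bh_neg_subspace_exists (v : OrthonormalBasis (Fin n) ℝ (EuclideanSpace ℝ (Fin n)))
    (μ : Fin n → ℝ) :
    ∃ W : Submodule ℝ (EuclideanSpace ℝ (Fin n)),
      Module.finrank ℝ W = (Finset.univ.filter fun i => μ i < 0).card ∧
      ∀ x ∈ W, x ≠ 0 → ∑ i, μ i * (inner ℝ (v i) x : ℝ)^2 < 0 := by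
  classical
  refine ⟨Submodule.span ℝ (Set.range fun i : {i // μ i < 0} => (v i : EuclideanSpace ℝ (Fin n))),
    ?_, ?_⟩
  · have li : LinearIndependent ℝ (fun i : {i // μ i < 0} => (v i : EuclideanSpace ℝ (Fin n))) :=
      v.orthonormal.linearIndependent.comp _ Subtype.val_injective
    rw [finrank_span_eq_card li]
    simp [Fintype.card_subtype]
  · intro x hx hx0
    have hcz : ∀ j, ¬ μ j < 0 → (inner ℝ (v j) x : ℝ) = 0 := fun j hj =>
      bh_coord_zero v _ x hx j hj
    obtain ⟨i0, hi0⟩ : ∃ i, (inner ℝ (v i) x : ℝ) ≠ 0 := by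
      by_contra h
      push_neg at h
      exact hx0 (bh_eq_zero_of_coords v x h)
    have hi0neg : μ i0 < 0 := by
      by_contra h
      exact hi0 (hcz i0 h)
    have hterm : ∀ i ∈ Finset.univ, μ i * (inner ℝ (v i) x : ℝ)^2 ≤ (0 : Fin n → ℝ) i := by
      intro i _
      show μ i * (inner ℝ (v i) x : ℝ)^2 ≤ 0
      by_cases h : μ i < 0
      · exact mul_nonpos_of_nonpos_of_nonneg h.le (sq_nonneg _)
      · rw [hcz i h]; simp
    calc ∑ i, μ i * (inner ℝ (v i) x : ℝ)^2 < ∑ i, (0 : Fin n → ℝ) i := by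
          refine Finset.sum_lt_sum hterm ⟨i0, Finset.mem_univ _, ?_⟩
          show μ i0 * (inner ℝ (v i0) x : ℝ)^2 < 0
          exact mul_neg_of_neg_of_pos hi0neg (by positivity)
      _ = 0 := by simp

private lemma bh_neg_subspace_le (v : OrthonormalBasis (Fin n) ℝ (EuclideanSpace ℝ (Fin n)))
    (μ : Fin n → ℝ) (W : Submodule ℝ (EuclideanSpace ℝ (Fin n)))
    (hW : ∀ x ∈ W, x ≠ 0 → ∑ i, μ i * (inner ℝ (v i) x : ℝ)^2 < 0) :
    Module.finrank ℝ W ≤ (Finset.univ.filter fun i => μ i < 0).card := by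
  classical
  set U := Submodule.span ℝ
    (Set.range fun i : {i // ¬ μ i < 0} => (v i : EuclideanSpace ℝ (Fin n))) with hU
  have hUrank : Module.finrank ℝ U =
      (Finset.univ.filter fun i => ¬ μ i < 0).card := by
    have li : LinearIndependent ℝ (fun i : {i // ¬ μ i < 0}
        => (v i : EuclideanSpace ℝ (Fin n))) :=
      v.orthonormal.linearIndependent.comp _ Subtype.val_injective
    rw [hU, finrank_span_eq_card li]
    simp [Fintype.card_subtype]
  have hdisj : Disjoint W U := by
    rw [Submodule.disjoint_def]
    intro x hxW hxU
    by_contra hx0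
    have hneg := hW x hxW hx0
    have hnonneg : (0:ℝ) ≤ ∑ i, μ i * (inner ℝ (v i) x : ℝ)^2 := by
      refine Finset.sum_nonneg fun i _ => ?_
      by_cases h : μ i < 0
      · rw [bh_coord_zero v _ x hxU i (by simpa using h)]; simp
      · exact mul_nonneg (not_lt.mp h) (sq_nonneg _)
    linarith
  have hle := Submodule.finrank_add_finrank_le_of_disjoint hdisj
  rw [finrank_euclideanSpace, Fintype.card_fin] at hle
  have hsplit : (Finset.univ.filter fun i => μ i < 0).card
      + (Finset.univ.filter fun i => ¬ μ i < 0).card = n := by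
    rw [Finset.card_filter_add_card_filter_not]
    simp
  omega

private lemma bh_count_le (v w : OrthonormalBasis (Fin n) ℝ (EuclideanSpace ℝ (Fin n)))
    (μ κ : Fin n → ℝ) (T : EuclideanSpace ℝ (Fin n) →ₗ[ℝ] EuclideanSpace ℝ (Fin n))
    (hT : Function.Injective T)
    (hrel : ∀ x, ∑ i, μ i * (inner ℝ (v i) x : ℝ)^2 = ∑ i, κ i * (inner ℝ (w i) (T x) : ℝ)^2) :
    (Finset.univ.filter fun i => μ i < 0).card ≤ (Finset.univ.filter fun i => κ i < 0).card := by
  obtain ⟨W, hWrank, hWneg⟩ := bh_neg_subspace_exists v μ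
  have key : ∀ y ∈ W.map T, y ≠ 0 → ∑ i, κ i * (inner ℝ (w i) y : ℝ)^2 < 0 := by
    rintro y ⟨x, hxW, rfl⟩ hy0
    have hx0 : x ≠ 0 := fun h => hy0 (by rw [h, map_zero])
    rw [← hrel x]
    exact hWneg x hxW hx0
  have hfin := bh_neg_subspace_le w κ (W.map T) key
  rwa [← (Submodule.equivMapOfInjective T hT W).finrank_eq, hWrank] at hfin

private lemma bh_apply_eigvec {Y : Matrix (Fin n) (Fin n) ℝ} (hY : Y.IsHermitian) (i : Fin n) :
    Matrix.toEuclideanLin Y (hY.eigenvectorBasis i) = hY.eigenvalues i • hY.eigenvectorBasis i := by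
  have h := hY.mulVec_eigenvectorBasis i
  ext j
  rw [Matrix.toEuclideanLin_apply]
  exact congrFun h j

private lemma bh_rep_shift {Y : Matrix (Fin n) (Fin n) ℝ} (hY : Y.IsHermitian) (t : ℝ)
    (x : EuclideanSpace ℝ (Fin n)) :
    ∑ i, (hY.eigenvalues i - t) * (inner ℝ (hY.eigenvectorBasis i) x : ℝ)^2
      = (inner ℝ x (Matrix.toEuclideanLin Y x) : ℝ) - t * (inner ℝ x x : ℝ) := by
  have hsym : LinearMap.IsSymmetric (Matrix.toEuclideanLin Y) :=
    (Matrix.isHermitian_iff_isSymmetric.mp hY)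
  have h1 : (inner ℝ x (Matrix.toEuclideanLin Y x) : ℝ)
      = ∑ i, hY.eigenvalues i * (inner ℝ (hY.eigenvectorBasis i) x : ℝ)^2 := by
    rw [← hY.eigenvectorBasis.sum_inner_mul_inner x (Matrix.toEuclideanLin Y x)]
    refine Finset.sum_congr rfl fun i _ => ?_
    have h2 : (inner ℝ (hY.eigenvectorBasis i) (Matrix.toEuclideanLin Y x) : ℝ)
        = hY.eigenvalues i * (inner ℝ (hY.eigenvectorBasis i) x : ℝ) := by
      rw [← hsym (hY.eigenvectorBasis i) x, bh_apply_eigvec hY i, inner_smul_left]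
      simp
    rw [h2, real_inner_comm x (hY.eigenvectorBasis i)]
    ring
  have h2 : (inner ℝ x x : ℝ) = ∑ i, (inner ℝ (hY.eigenvectorBasis i) x : ℝ)^2 := by
    rw [← hY.eigenvectorBasis.sum_inner_mul_inner x x]
    refine Finset.sum_congr rfl fun i _ => ?_
    rw [real_inner_comm x (hY.eigenvectorBasis i)]
    ring
  rw [h1, h2, Finset.mul_sum, ← Finset.sum_sub_distrib]
  exact Finset.sum_congr rfl fun i _ => by ring

private lemma bh_diag_inv (s : Fin n → ℝ) (hs : ∀ i, s i ≠ 0) :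
    (Matrix.diagonal s)⁻¹ = Matrix.diagonal (fun i => (s i)⁻¹) := by
  apply Matrix.inv_eq_right_inv
  rw [Matrix.diagonal_mul_diagonal]
  have h : (fun i => s i * (s i)⁻¹) = fun _ => (1:ℝ) := funext fun i => mul_inv_cancel₀ (hs i)
  rw [h, Matrix.diagonal_one]

private lemma bh_key_matrix (A : Matrix (Fin n) (Fin n) ℝ) (d : Fin n → ℝ) (τ r : ℝ)
    (hpos : ∀ i, 0 < d i + τ) :
    let S := Matrix.diagonal (fun i => Real.sqrt (d i + τ))
    S⁻¹ * (τ • (1 : Matrix (Fin n) (Fin n) ℝ) + (Matrix.diagonal d - r • A)) * S⁻¹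
      = 1 - r • (S⁻¹ * A * S⁻¹) := by
  intro S
  have hs : ∀ i, Real.sqrt (d i + τ) ≠ 0 := fun i =>
    ne_of_gt (Real.sqrt_pos.mpr (hpos i))
  have hSinv : S⁻¹ = Matrix.diagonal (fun i => (Real.sqrt (d i + τ))⁻¹) := bh_diag_inv _ hs
  have hMdiag : τ • (1 : Matrix (Fin n) (Fin n) ℝ) + Matrix.diagonal d
      = Matrix.diagonal (fun i => τ + d i) := by
    ext i j
    by_cases h : i = j
    · subst h; simp [Matrix.one_apply]
    · simp [Matrix.one_apply, Matrix.diagonal_apply_ne _ h, h]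
  have expand : τ • (1 : Matrix (Fin n) (Fin n) ℝ) + (Matrix.diagonal d - r • A)
      = Matrix.diagonal (fun i => τ + d i) - r • A := by
    rw [← hMdiag]; abel
  rw [expand, hSinv]
  rw [Matrix.mul_sub, Matrix.sub_mul]
  congr 1
  · rw [Matrix.diagonal_mul_diagonal, Matrix.diagonal_mul_diagonal]
    have h : (fun i => (Real.sqrt (d i + τ))⁻¹ * (τ + d i) * (Real.sqrt (d i + τ))⁻¹)
        = fun _ => (1:ℝ) := by
      funext i
      have hsq : Real.sqrt (d i + τ) * Real.sqrt (d i + τ) = d i + τ :=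
        Real.mul_self_sqrt (hpos i).le
      rw [mul_comm ((Real.sqrt (d i + τ))⁻¹) (τ + d i), mul_assoc, ← mul_inv, hsq]
      rw [add_comm τ (d i)]
      exact mul_inv_cancel₀ (ne_of_gt (hpos i))
    rw [h, Matrix.diagonal_one]
  · rw [Matrix.mul_smul, Matrix.smul_mul]

private lemma bh_dot_congruence (M P : Matrix (Fin n) (Fin n) ℝ) (hP : Pᵀ = P) (x : Fin n → ℝ) :
    x ⬝ᵥ ((P * M * P) *ᵥ x) = (P *ᵥ x) ⬝ᵥ (M *ᵥ (P *ᵥ x)) := by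
  have hv : x ᵥ* P = P *ᵥ x := by
    nth_rewrite 1 [← hP]
    exact Matrix.vecMul_transpose P x
  calc x ⬝ᵥ ((P * M * P) *ᵥ x) = x ⬝ᵥ (P *ᵥ ((M * P) *ᵥ x)) := by
        rw [Matrix.mulVec_mulVec, ← Matrix.mul_assoc]
    _ = (x ᵥ* P) ⬝ᵥ ((M * P) *ᵥ x) := Matrix.dotProduct_mulVec x P _
    _ = (P *ᵥ x) ⬝ᵥ ((M * P) *ᵥ x) := by rw [hv]
    _ = (P *ᵥ x) ⬝ᵥ (M *ᵥ (P *ᵥ x)) := by rw [Matrix.mulVec_mulVec]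

private lemma bh_perm_count (σ : Equiv.Perm (Fin n)) (P : Fin n → Prop) [DecidablePred P] :
    (Finset.univ.filter fun i => P (σ i)).card = (Finset.univ.filter P).card := by
  refine Finset.card_bij (fun i _ => σ i) ?_ ?_ ?_
  · intro a ha
    simp only [Finset.mem_filter, Finset.mem_univ, true_and] at ha ⊢
    exact ha
  · intro a _ b _ h
    exact σ.injective h
  · intro b hb
    simp only [Finset.mem_filter, Finset.mem_univ, true_and] at hb ⊢
    exact ⟨σ.symm b, by simpa using hb, by simp⟩

private lemma bh_monotone_char {f : Fin n → ℝ} (hf : Monotone f) (k : Fin n) (c : ℝ)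
    (h1 : (Finset.univ.filter fun i => f i < c).card ≤ (k : ℕ))
    (h2 : (Finset.univ.filter fun i => c < f i).card ≤ n - 1 - (k : ℕ)) :
    f k = c := by
  have hk := k.isLt
  refine le_antisymm ?_ ?_
  · by_contra h
    push_neg at h
    have hsub : Finset.Ici k ⊆ Finset.univ.filter fun i => c < f i := by
      intro i hi
      simp only [Finset.mem_Ici] at hi
      simp only [Finset.mem_filter, Finset.mem_univ, true_and]
      exact lt_of_lt_of_le h (hf hi)
    have hcard := Finset.card_le_card hsub
    rw [Fin.card_Ici] at hcard
    omega
  · by_contra h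
    push_neg at h
    have hsub : Finset.Iic k ⊆ Finset.univ.filter fun i => f i < c := by
      intro i hi
      simp only [Finset.mem_Iic] at hi
      simp only [Finset.mem_filter, Finset.mem_univ, true_and]
      exact lt_of_le_of_lt (hf hi) h
    have hcard := Finset.card_le_card hsub
    rw [Fin.card_Iic] at hcard
    omega

private lemma bh_inner_toEL (M : Matrix (Fin n) (Fin n) ℝ) (x y : EuclideanSpace ℝ (Fin n)) :
    (inner ℝ x (Matrix.toEuclideanLin M y) : ℝ)
      = (WithLp.equiv 2 (Fin n → ℝ) x) ⬝ᵥ (M *ᵥ (WithLp.equiv 2 (Fin n → ℝ) y)) := by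
  rw [EuclideanSpace.inner_eq_star_dotProduct]
  simp only [dotProduct, star_trivial]
  exact Finset.sum_congr rfl fun i _ => mul_comm _ _

private lemma bh_inner_self_dot (x : EuclideanSpace ℝ (Fin n)) :
    (inner ℝ x x : ℝ) = (WithLp.equiv 2 (Fin n → ℝ) x) ⬝ᵥ (WithLp.equiv 2 (Fin n → ℝ) x) := by
  rw [EuclideanSpace.inner_eq_star_dotProduct]
  simp [dotProduct]

private lemma bh_T_inj (s : Fin n → ℝ) (hs : ∀ i, s i ≠ 0) :
    Function.Injective (Matrix.toEuclideanLin (Matrix.diagonal s)) := by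
  intro a b h
  have h2 := congrArg (WithLp.equiv 2 (Fin n → ℝ)) h
  change (Matrix.diagonal s) *ᵥ (WithLp.equiv 2 (Fin n → ℝ) a) = (Matrix.diagonal s) *ᵥ (WithLp.equiv 2 (Fin n → ℝ) b) at h2
  have h' : ∀ i, s i * (WithLp.equiv 2 (Fin n → ℝ) a) i
      = s i * (WithLp.equiv 2 (Fin n → ℝ) b) i := by
    intro i
    have h3 := congrFun h2 i
    simpa [Matrix.mulVec_diagonal] using h3
  have h4 : WithLp.equiv 2 (Fin n → ℝ) a = WithLp.equiv 2 (Fin n → ℝ) b :=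
    funext fun i => mul_left_cancel₀ (hs i) (h' i)
  exact (WithLp.equiv 2 (Fin n → ℝ)).injective h4

private lemma bh_main_rel (A : Matrix (Fin n) (Fin n) ℝ) (d : Fin n → ℝ) (τ r : ℝ) (hr : r ≠ 0)
    (hpos : ∀ i, 0 < d i + τ) (x : EuclideanSpace ℝ (Fin n)) :
    (inner ℝ x (Matrix.toEuclideanLin
        ((Matrix.diagonal fun i => Real.sqrt (d i + τ))⁻¹ * A *
          (Matrix.diagonal fun i => Real.sqrt (d i + τ))⁻¹) x) : ℝ) - (1/r) * (inner ℝ x x : ℝ)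
      = -(1/r) * ((inner ℝ (Matrix.toEuclideanLin (Matrix.diagonal fun i => Real.sqrt (d i + τ))⁻¹ x)
            (Matrix.toEuclideanLin (Matrix.diagonal d - r • A)
              (Matrix.toEuclideanLin (Matrix.diagonal fun i => Real.sqrt (d i + τ))⁻¹ x)) : ℝ)
          - (-τ) * (inner ℝ (Matrix.toEuclideanLin (Matrix.diagonal fun i => Real.sqrt (d i + τ))⁻¹ x)
              (Matrix.toEuclideanLin (Matrix.diagonal fun i => Real.sqrt (d i + τ))⁻¹ x) : ℝ)) := by
  have hs : ∀ i, Real.sqrt (d i + τ) ≠ 0 := fun i => ne_of_gt (Real.sqrt_pos.mpr (hpos i))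
  set S : Matrix (Fin n) (Fin n) ℝ := Matrix.diagonal (fun i => Real.sqrt (d i + τ)) with hS
  have hSinv : S⁻¹ = Matrix.diagonal (fun i => (Real.sqrt (d i + τ))⁻¹) := bh_diag_inv _ hs
  have hSymm : (S⁻¹)ᵀ = S⁻¹ := by rw [hSinv, Matrix.diagonal_transpose]
  set x' : Fin n → ℝ := WithLp.equiv 2 (Fin n → ℝ) x with hx'
  set y' : Fin n → ℝ := S⁻¹ *ᵥ x' with hy'
  set H : Matrix (Fin n) (Fin n) ℝ := Matrix.diagonal d - r • A with hH
  have e1 : (inner ℝ x (Matrix.toEuclideanLin (S⁻¹ * A * S⁻¹) x) : ℝ)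
      = x' ⬝ᵥ ((S⁻¹ * A * S⁻¹) *ᵥ x') := bh_inner_toEL _ x x
  have e2 : (inner ℝ x x : ℝ) = x' ⬝ᵥ x' := bh_inner_self_dot x
  have hyel : WithLp.equiv 2 (Fin n → ℝ) (Matrix.toEuclideanLin S⁻¹ x) = y' := by
    rfl
  have e3 : (inner ℝ (Matrix.toEuclideanLin S⁻¹ x)
      (Matrix.toEuclideanLin H (Matrix.toEuclideanLin S⁻¹ x)) : ℝ) = y' ⬝ᵥ (H *ᵥ y') := by
    rw [bh_inner_toEL, hyel]
  have e4 : (inner ℝ (Matrix.toEuclideanLin S⁻¹ x) (Matrix.toEuclideanLin S⁻¹ x) : ℝ)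
      = y' ⬝ᵥ y' := by rw [bh_inner_self_dot, hyel]
  rw [e1, e2, e3, e4]
  have hkey := bh_key_matrix A d τ r hpos
  have hcong : x' ⬝ᵥ ((1 - r • (S⁻¹ * A * S⁻¹)) *ᵥ x') = y' ⬝ᵥ ((τ • 1 + H) *ᵥ y') := by
    rw [← hkey]
    exact bh_dot_congruence (τ • 1 + H) S⁻¹ hSymm x'
  have hexp1 : x' ⬝ᵥ ((1 - r • (S⁻¹ * A * S⁻¹)) *ᵥ x')
      = x' ⬝ᵥ x' - r * (x' ⬝ᵥ ((S⁻¹ * A * S⁻¹) *ᵥ x')) := by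
    rw [Matrix.sub_mulVec, Matrix.one_mulVec, dotProduct_sub,
      Matrix.smul_mulVec, dotProduct_smul]
    simp
  have hexp2 : y' ⬝ᵥ ((τ • 1 + H) *ᵥ y') = τ * (y' ⬝ᵥ y') + y' ⬝ᵥ (H *ᵥ y') := by
    rw [Matrix.add_mulVec, dotProduct_add, Matrix.smul_mulVec,
      dotProduct_smul, Matrix.one_mulVec]
    simp
  rw [hexp1, hexp2] at hcong
  set a := x' ⬝ᵥ ((S⁻¹ * A * S⁻¹) *ᵥ x') with ha
  set b := x' ⬝ᵥ x' with hb
  set c := y' ⬝ᵥ (H *ᵥ y') with hc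
  set e := y' ⬝ᵥ y' with he
  field_simp
  linarith [hcong]

end Aux

/-- Ascending list of eigenvalues (with multiplicity) of a Hermitian real matrix. -/
noncomputable def sortEig {n : ℕ} {M : Matrix (Fin n) (Fin n) ℝ} (hM : M.IsHermitian) :
    Fin n → ℝ :=
  fun i => hM.eigenvalues (Tuple.sort hM.eigenvalues i)

private lemma bh_final {n : ℕ} (A : Matrix (Fin n) (Fin n) ℝ) (d : Fin n → ℝ) (τ r : ℝ)
    (hr0 : 0 < r) (hpos : ∀ i, 0 < d i + τ)
    (hH : (Matrix.diagonal d - r • A).IsHermitian)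
    (hLs : ((Matrix.diagonal fun i => Real.sqrt (d i + τ))⁻¹ * A *
      (Matrix.diagonal fun i => Real.sqrt (d i + τ))⁻¹).IsHermitian)
    (p : ℕ) (hp2 : 2 ≤ p) (hpn : p ≤ n)
    (hval : sortEig hH ⟨p - 1, Nat.lt_of_lt_of_le (Nat.sub_lt (by omega) Nat.one_pos) hpn⟩ = -τ) :
    sortEig hLs ⟨n - p, Nat.sub_lt (by omega) (by omega)⟩ = 1 / r := by
  classical
  have hrne : r ≠ 0 := ne_of_gt hr0
  have h1r : 0 < 1/r := by positivity
  have hsne : ∀ i, Real.sqrt (d i + τ) ≠ 0 := fun i => ne_of_gt (Real.sqrt_pos.mpr (hpos i))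
  have hTinj : Function.Injective
      (Matrix.toEuclideanLin (Matrix.diagonal fun i => Real.sqrt (d i + τ))⁻¹) := by
    rw [bh_diag_inv _ hsne]
    exact bh_T_inj _ (fun i => inv_ne_zero (hsne i))
  -- the quadratic form relation
  have hrel0 : ∀ x : EuclideanSpace ℝ (Fin n),
      ∑ i, (hLs.eigenvalues i - 1/r) * (inner ℝ (hLs.eigenvectorBasis i) x : ℝ)^2
        = ∑ i, (-(1/r) * (hH.eigenvalues i - (-τ))) *
            (inner ℝ (hH.eigenvectorBasis i)
              (Matrix.toEuclideanLin (Matrix.diagonal fun i => Real.sqrt (d i + τ))⁻¹ x) : ℝ)^2 := by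
    intro x
    rw [bh_rep_shift hLs (1/r) x]
    have hmsum : ∑ i, (-(1/r) * (hH.eigenvalues i - (-τ))) *
          (inner ℝ (hH.eigenvectorBasis i)
            (Matrix.toEuclideanLin (Matrix.diagonal fun i => Real.sqrt (d i + τ))⁻¹ x) : ℝ)^2
        = -(1/r) * ∑ i, (hH.eigenvalues i - (-τ)) *
            (inner ℝ (hH.eigenvectorBasis i)
              (Matrix.toEuclideanLin (Matrix.diagonal fun i => Real.sqrt (d i + τ))⁻¹ x) : ℝ)^2 := by
      rw [Finset.mul_sum]
      exact Finset.sum_congr rfl fun i _ => by ring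
    rw [hmsum, bh_rep_shift hH (-τ)]
    exact bh_main_rel A d τ r hrne hpos x
  have hrel0' : ∀ x : EuclideanSpace ℝ (Fin n),
      ∑ i, (1/r - hLs.eigenvalues i) * (inner ℝ (hLs.eigenvectorBasis i) x : ℝ)^2
        = ∑ i, ((1/r) * (hH.eigenvalues i - (-τ))) *
            (inner ℝ (hH.eigenvectorBasis i)
              (Matrix.toEuclideanLin (Matrix.diagonal fun i => Real.sqrt (d i + τ))⁻¹ x) : ℝ)^2 := by
    intro x
    have h := hrel0 x
    have e1 : ∑ i, (1/r - hLs.eigenvalues i) * (inner ℝ (hLs.eigenvectorBasis i) x : ℝ)^2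
        = -∑ i, (hLs.eigenvalues i - 1/r) * (inner ℝ (hLs.eigenvectorBasis i) x : ℝ)^2 := by
      rw [← Finset.sum_neg_distrib]
      exact Finset.sum_congr rfl fun i _ => by ring
    have e2 : ∑ i, ((1/r) * (hH.eigenvalues i - (-τ))) *
          (inner ℝ (hH.eigenvectorBasis i)
            (Matrix.toEuclideanLin (Matrix.diagonal fun i => Real.sqrt (d i + τ))⁻¹ x) : ℝ)^2
        = -∑ i, (-(1/r) * (hH.eigenvalues i - (-τ))) *
            (inner ℝ (hH.eigenvectorBasis i)
              (Matrix.toEuclideanLin (Matrix.diagonal fun i => Real.sqrt (d i + τ))⁻¹ x) : ℝ)^2 := by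
      rw [← Finset.sum_neg_distrib]
      exact Finset.sum_congr rfl fun i _ => by ring
    rw [e1, e2, h]
  -- counts on the H side
  have hmonoH : Monotone (fun i => hH.eigenvalues (Tuple.sort hH.eigenvalues i)) :=
    Tuple.monotone_sort hH.eigenvalues
  have hHgt : (Finset.univ.filter fun i => -τ < hH.eigenvalues i).card ≤ n - p := by
    rw [← bh_perm_count (Tuple.sort hH.eigenvalues) (fun j => -τ < hH.eigenvalues j)]
    have hsub : (Finset.univ.filter fun i => -τ < hH.eigenvalues (Tuple.sort hH.eigenvalues i))
        ⊆ Finset.Ioi (⟨p - 1, by omega⟩ : Fin n) := by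
      intro i hi
      simp only [Finset.mem_filter, Finset.mem_univ, true_and] at hi
      rw [Finset.mem_Ioi]
      by_contra hle
      push_neg at hle
      have h2 : hH.eigenvalues (Tuple.sort hH.eigenvalues i) ≤ sortEig hH ⟨p - 1, by omega⟩ :=
        hmonoH hle
      rw [hval] at h2
      linarith
    have := Finset.card_le_card hsub
    rw [Fin.card_Ioi] at this
    simp only [] at this
    omega
  have hHlt : (Finset.univ.filter fun i => hH.eigenvalues i < -τ).card ≤ p - 1 := by
    rw [← bh_perm_count (Tuple.sort hH.eigenvalues) (fun j => hH.eigenvalues j < -τ)]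
    have hsub : (Finset.univ.filter fun i => hH.eigenvalues (Tuple.sort hH.eigenvalues i) < -τ)
        ⊆ Finset.Iio (⟨p - 1, by omega⟩ : Fin n) := by
      intro i hi
      simp only [Finset.mem_filter, Finset.mem_univ, true_and] at hi
      rw [Finset.mem_Iio]
      by_contra hle
      push_neg at hle
      have h2 : sortEig hH ⟨p - 1, by omega⟩ ≤ hH.eigenvalues (Tuple.sort hH.eigenvalues i) :=
        hmonoH hle
      rw [hval] at h2
      linarith
    have := Finset.card_le_card hsub
    rw [Fin.card_Iio] at this
    simp only [] at this
    omega
  -- transporting the counts to L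
  have cnt1 : (Finset.univ.filter fun i => hLs.eigenvalues i < 1/r).card ≤ n - p := by
    have h := bh_count_le hLs.eigenvectorBasis hH.eigenvectorBasis
      (fun i => hLs.eigenvalues i - 1/r)
      (fun i => -(1/r) * (hH.eigenvalues i - (-τ)))
      (Matrix.toEuclideanLin (Matrix.diagonal fun i => Real.sqrt (d i + τ))⁻¹) hTinj hrel0
    have e1 : (Finset.univ.filter fun i => hLs.eigenvalues i - 1/r < 0)
        = Finset.univ.filter fun i => hLs.eigenvalues i < 1/r :=
      Finset.filter_congr fun i _ => by constructor <;> intro h' <;> linarith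
    have e2 : (Finset.univ.filter fun i => -(1/r) * (hH.eigenvalues i - (-τ)) < 0)
        = Finset.univ.filter fun i => -τ < hH.eigenvalues i :=
      Finset.filter_congr fun i _ => by constructor <;> intro h' <;> nlinarith
    rw [e1, e2] at h
    exact le_trans h hHgt
  have cnt2 : (Finset.univ.filter fun i => 1/r < hLs.eigenvalues i).card ≤ p - 1 := by
    have h := bh_count_le hLs.eigenvectorBasis hH.eigenvectorBasis
      (fun i => 1/r - hLs.eigenvalues i)
      (fun i => (1/r) * (hH.eigenvalues i - (-τ)))
      (Matrix.toEuclideanLin (Matrix.diagonal fun i => Real.sqrt (d i + τ))⁻¹) hTinj hrel0'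
    have e1 : (Finset.univ.filter fun i => 1/r - hLs.eigenvalues i < 0)
        = Finset.univ.filter fun i => 1/r < hLs.eigenvalues i :=
      Finset.filter_congr fun i _ => by constructor <;> intro h' <;> linarith
    have e2 : (Finset.univ.filter fun i => (1/r) * (hH.eigenvalues i - (-τ)) < 0)
        = Finset.univ.filter fun i => hH.eigenvalues i < -τ :=
      Finset.filter_congr fun i _ => by constructor <;> intro h' <;> nlinarith
    rw [e1, e2] at h
    exact le_trans h hHlt
  -- finish via the monotone sorted sequence
  have hmonoL : Monotone (fun i => hLs.eigenvalues (Tuple.sort hLs.eigenvalues i)) :=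
    Tuple.monotone_sort hLs.eigenvalues
  have hc1 : (Finset.univ.filter fun i =>
        hLs.eigenvalues (Tuple.sort hLs.eigenvalues i) < 1/r).card
      = (Finset.univ.filter fun i => hLs.eigenvalues i < 1/r).card :=
    bh_perm_count (Tuple.sort hLs.eigenvalues) (fun j => hLs.eigenvalues j < 1/r)
  have hc2 : (Finset.univ.filter fun i =>
        1/r < hLs.eigenvalues (Tuple.sort hLs.eigenvalues i)).card
      = (Finset.univ.filter fun i => 1/r < hLs.eigenvalues i).card :=
    bh_perm_count (Tuple.sort hLs.eigenvalues) (fun j => 1/r < hLs.eigenvalues j)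
  show (fun i => hLs.eigenvalues (Tuple.sort hLs.eigenvalues i)) ⟨n - p, by omega⟩ = 1/r
  apply bh_monotone_char hmonoL
  · rw [hc1]
    simpa using cnt1
  · rw [hc2]
    have : (n:ℕ) - 1 - ((⟨n - p, by omega⟩ : Fin n) : ℕ) = p - 1 := by
      simp only []
      omega
    rw [this]
    exact cnt2

/-- if `r > 1`, `p ≥ 2` and the `p`-th smallest eigenvalue `s` of
`D − rA` is strictly negative, then with `τ = −s`, the `p`-th largest eigenvalue of
`L_τ^{sym} = (D+τI)^{-1/2} A (D+τI)^{-1/2}` equals `1/r`. -/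
theorem stmt13 {n : ℕ} (A D : Matrix (Fin n) (Fin n) ℝ)
    (hAsymm : Aᵀ = A) (hA01 : ∀ i j, A i j = 0 ∨ A i j = 1) (hAdiag : ∀ i, A i i = 0)
    (hD : D = Matrix.diagonal fun i => ∑ j, A i j)
    (r : ℝ) (hr : 1 < r) (p : ℕ) (hp2 : 2 ≤ p) (hpn : p ≤ n)
    (hH : (D - r • A).IsHermitian)
    (hneg : sortEig hH ⟨p - 1, by omega⟩ < 0)
    (hLs : ((Matrix.diagonal fun i =>
          Real.sqrt ((∑ j, A i j) + (-(sortEig hH ⟨p - 1, by omega⟩))))⁻¹ * A *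
        (Matrix.diagonal fun i =>
          Real.sqrt ((∑ j, A i j) + (-(sortEig hH ⟨p - 1, by omega⟩))))⁻¹).IsHermitian) :
    sortEig hLs ⟨n - p, by omega⟩ = 1 / r := by
  subst hD
  have hr0 : (0:ℝ) < r := lt_trans zero_lt_one hr
  have hdnonneg : ∀ i, (0:ℝ) ≤ ∑ j, A i j := fun i =>
    Finset.sum_nonneg fun j _ => by rcases hA01 i j with h | h <;> rw [h] <;> norm_num
  have hpos : ∀ i, 0 < (∑ j, A i j) + (-(sortEig hH ⟨p - 1, by omega⟩)) := fun i => by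
    have := hdnonneg i
    linarith
  exact bh_final A (fun i => ∑ j, A i j) (-(sortEig hH ⟨p - 1, by omega⟩)) r hr0 hpos hH hLs
    p hp2 hpn (by rw [neg_neg])
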